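/- Let G be a finite connected simple graph of order n ≥ 7 having at least one vertex u with 3 ≤ deg(u) ≤ n−4. Then β_p(G) ≤ n−3. -/
import Mathlib


open Classical SimpleGraph

noncomputable section

/-- The distance from a vertex to a set of vertices. -/
def setDist {V : Type*} (G : SimpleGraph V) (u : V) (S : Set V) : ℕ :=
  sInf ((G.dist u) '' S)

/-- A locating partition of a graph: a partition of the vertex set such that every
vertex is uniquely determined by its vector of distances to the parts. -/
def IsLocatingPartition {V : Type*} (G : SimpleGraph V) (P : Set (Set V)) : Prop :=
  Setoid.IsPartition P ∧
    ∀ u v : V, (∀ S ∈ P, setDist G u S = setDist G v S) → u = v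

/-- The partition dimension: the minimum cardinality of a locating partition. -/
def partitionDim {V : Type*} (G : SimpleGraph V) : ℕ :=
  sInf {k | ∃ P : Set (Set V), IsLocatingPartition G P ∧ P.ncard = k}

/-- Two vertices are twins if they have the same neighbors other than themselves. -/
def IsTwin {V : Type*} (G : SimpleGraph V) (u v : V) : Prop :=
  G.neighborSet u \ {v} = G.neighborSet v \ {u}

/-- The twin class of a vertex. -/
def twinClass {V : Type*} (G : SimpleGraph V) (u : V) : Set V :=
  {v | IsTwin G u v}

/-- The twin number: the maximum cardinality of a twin class. -/
def twinNumber {V : Type*} (G : SimpleGraph V) : ℕ :=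
  sSup {k | ∃ u : V, (twinClass G u).ncard = k}

lemma setDist_singleton {V : Type*} (G : SimpleGraph V) (x y : V) :
    setDist G x {y} = G.dist x y := by
  simp [setDist]

lemma setDist_eq_zero_iff {V : Type*} {G : SimpleGraph V} (hG : G.Connected)
    {S : Set V} (hS : S.Nonempty) (x : V) : setDist G x S = 0 ↔ x ∈ S := by
  rw [setDist, Nat.sInf_eq_zero]
  constructor
  · rintro (⟨y, hy, hxy⟩ | h)
    · rwa [hG.dist_eq_zero_iff.mp hxy]
    · exact absurd h (hS.image _).ne_empty
  · intro hx
    exact Or.inl ⟨x, hx, hG.dist_eq_zero_iff.mpr rfl⟩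

/-- If `G` is a connected graph of order `n ≥ 7` with a vertex `u` satisfying
`3 ≤ deg(u) ≤ n - 4`, then `β_p(G) ≤ n - 3`. -/
theorem partitionDim_le_of_middle_degree {V : Type*} [Fintype V]
    (G : SimpleGraph V) (hG : G.Connected) (n : ℕ) (hn : Fintype.card V = n)
    (h7 : 7 ≤ n) (u : V) (hdeg₁ : 3 ≤ (G.neighborSet u).ncard)
    (hdeg₂ : (G.neighborSet u).ncard ≤ n - 4) :
    partitionDim G ≤ n - 3 := by
  classical
  -- three neighbors of u
  obtain ⟨N3, hN3sub, hN3card⟩ := Set.exists_subset_card_eq hdeg₁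
  obtain ⟨v1, v2, v3, hv12, hv13, hv23, rfl⟩ := Set.ncard_eq_three.mp hN3card
  have hv1 : G.Adj u v1 := hN3sub (by simp)
  have hv2 : G.Adj u v2 := hN3sub (by simp)
  have hv3 : G.Adj u v3 := hN3sub (by simp)
  -- three non-neighbors of u
  set W : Set V := (insert u (G.neighborSet u))ᶜ with hW
  have hWcompl : (insert u (G.neighborSet u)).ncard + W.ncard = n := by
    rw [hW, Set.ncard_add_ncard_compl, Nat.card_eq_fintype_card, hn]
  have hinscard : (insert u (G.neighborSet u)).ncard = (G.neighborSet u).ncard + 1 := by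
    rw [Set.ncard_insert_of_notMem (by simp)]
  have hWcard : 3 ≤ W.ncard := by omega
  obtain ⟨W3, hW3sub, hW3card⟩ := Set.exists_subset_card_eq hWcard
  obtain ⟨w1, w2, w3, hw12, hw13, hw23, rfl⟩ := Set.ncard_eq_three.mp hW3card
  have hw1 : w1 ∈ W := hW3sub (by simp)
  have hw2 : w2 ∈ W := hW3sub (by simp)
  have hw3 : w3 ∈ W := hW3sub (by simp)
  have hwu1 : w1 ≠ u := fun h => hw1 (by rw [h]; exact Set.mem_insert _ _)
  have hwu2 : w2 ≠ u := fun h => hw2 (by rw [h]; exact Set.mem_insert _ _)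
  have hwu3 : w3 ≠ u := fun h => hw3 (by rw [h]; exact Set.mem_insert _ _)
  have hwa1 : ¬ G.Adj u w1 := fun h => hw1 (Set.mem_insert_of_mem _ h)
  have hwa2 : ¬ G.Adj u w2 := fun h => hw2 (Set.mem_insert_of_mem _ h)
  have hwa3 : ¬ G.Adj u w3 := fun h => hw3 (Set.mem_insert_of_mem _ h)
  -- v's and w's are distinct
  have hnadj : ∀ a b : V, G.Adj u a → ¬ G.Adj u b → a ≠ b :=
    fun a b ha hb h => hb (h ▸ ha)
  have hv1w1 : v1 ≠ w1 := hnadj _ _ hv1 hwa1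
  have hv1w2 : v1 ≠ w2 := hnadj _ _ hv1 hwa2
  have hv1w3 : v1 ≠ w3 := hnadj _ _ hv1 hwa3
  have hv2w1 : v2 ≠ w1 := hnadj _ _ hv2 hwa1
  have hv2w2 : v2 ≠ w2 := hnadj _ _ hv2 hwa2
  have hv2w3 : v2 ≠ w3 := hnadj _ _ hv2 hwa3
  have hv3w1 : v3 ≠ w1 := hnadj _ _ hv3 hwa1
  have hv3w2 : v3 ≠ w2 := hnadj _ _ hv3 hwa2
  have hv3w3 : v3 ≠ w3 := hnadj _ _ hv3 hwa3
  have huv1 : u ≠ v1 := fun h => G.irrefl (h ▸ hv1)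
  have huv2 : u ≠ v2 := fun h => G.irrefl (h ▸ hv2)
  have huv3 : u ≠ v3 := fun h => G.irrefl (h ▸ hv3)
  -- the six special vertices
  set T : Set V := {v1, v2, v3, w1, w2, w3} with hT
  have hmemT : ∀ x : V, x ∈ T ↔ x = v1 ∨ x = v2 ∨ x = v3 ∨ x = w1 ∨ x = w2 ∨ x = w3 := by
    intro x
    simp [hT]
  have hv1T : v1 ∈ T := (hmemT v1).mpr (Or.inl rfl)
  have hv2T : v2 ∈ T := (hmemT v2).mpr (Or.inr (Or.inl rfl))
  have hv3T : v3 ∈ T := (hmemT v3).mpr (Or.inr (Or.inr (Or.inl rfl)))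
  have hw1T : w1 ∈ T := (hmemT w1).mpr (Or.inr (Or.inr (Or.inr (Or.inl rfl))))
  have hw2T : w2 ∈ T := (hmemT w2).mpr (Or.inr (Or.inr (Or.inr (Or.inr (Or.inl rfl)))))
  have hw3T : w3 ∈ T := (hmemT w3).mpr (Or.inr (Or.inr (Or.inr (Or.inr (Or.inr rfl)))))
  have hTcard : T.ncard = 6 := by
    rw [hT]
    rw [Set.ncard_insert_of_notMem (by simp [hv12, hv13, hv1w1, hv1w2, hv1w3]),
      Set.ncard_insert_of_notMem (by simp [hv23, hv2w1, hv2w2, hv2w3]),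
      Set.ncard_insert_of_notMem (by simp [hv3w1, hv3w2, hv3w3]),
      Set.ncard_insert_of_notMem (by simp [hw12, hw13]),
      Set.ncard_insert_of_notMem (by simp [hw23]), Set.ncard_singleton]
  have hTcompl : T.ncard + Tᶜ.ncard = n := by
    rw [Set.ncard_add_ncard_compl, Nat.card_eq_fintype_card, hn]
  -- the partition
  set P : Set (Set V) :=
    {{v1, w1}, {v2, w2}, {v3, w3}} ∪ ((fun x => ({x} : Set V)) '' Tᶜ) with hP
  have hmemP : ∀ S, S ∈ P ↔ S = {v1, w1} ∨ S = {v2, w2} ∨ S = {v3, w3} ∨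
      ∃ x, x ∉ T ∧ S = {x} := by
    intro S
    simp only [hP, Set.mem_union, Set.mem_insert_iff, Set.mem_singleton_iff, Set.mem_image]
    constructor
    · rintro ((h | h | h) | ⟨x, hx, h⟩)
      · exact Or.inl h
      · exact Or.inr (Or.inl h)
      · exact Or.inr (Or.inr (Or.inl h))
      · exact Or.inr (Or.inr (Or.inr ⟨x, hx, h.symm⟩))
    · rintro (h | h | h | ⟨x, hx, h⟩)
      · exact Or.inl (Or.inl h)
      · exact Or.inl (Or.inr (Or.inl h))
      · exact Or.inl (Or.inr (Or.inr h))
      · exact Or.inr ⟨x, hx, h.symm⟩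
  have hu_notT : u ∉ T := by
    rw [hmemT]
    push_neg
    exact ⟨huv1, huv2, huv3, fun h => hwu1 h.symm, fun h => hwu2 h.symm,
      fun h => hwu3 h.symm⟩
  have huP : ({u} : Set V) ∈ P := (hmemP _).mpr (Or.inr (Or.inr (Or.inr ⟨u, hu_notT, rfl⟩)))
  have hpair1P : ({v1, w1} : Set V) ∈ P := (hmemP _).mpr (Or.inl rfl)
  have hpair2P : ({v2, w2} : Set V) ∈ P := (hmemP _).mpr (Or.inr (Or.inl rfl))
  have hpair3P : ({v3, w3} : Set V) ∈ P := (hmemP _).mpr (Or.inr (Or.inr (Or.inl rfl)))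
  -- uniqueness of the part containing a given special vertex
  have mem_pair : ∀ x a b : V, x ∈ ({a, b} : Set V) ↔ x = a ∨ x = b := by
    intro x a b; simp
  have uniq1 : ∀ S' ∈ P, (v1 ∈ S' ∨ w1 ∈ S') → S' = {v1, w1} := by
    intro S' hS' hx
    rcases (hmemP S').mp hS' with rfl | rfl | rfl | ⟨y, hy, rfl⟩
    · rfl
    · exfalso
      rcases hx with h | h <;> rw [mem_pair] at h
      · exact h.elim hv12 hv1w2
      · exact h.elim (fun h => hv2w1 h.symm) hw12
    · exfalso
      rcases hx with h | h <;> rw [mem_pair] at h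
      · exact h.elim hv13 hv1w3
      · exact h.elim (fun h => hv3w1 h.symm) hw13
    · exfalso
      rcases hx with h | h <;> rw [Set.mem_singleton_iff] at h
      · exact hy (h ▸ hv1T)
      · exact hy (h ▸ hw1T)
  have uniq2 : ∀ S' ∈ P, (v2 ∈ S' ∨ w2 ∈ S') → S' = {v2, w2} := by
    intro S' hS' hx
    rcases (hmemP S').mp hS' with rfl | rfl | rfl | ⟨y, hy, rfl⟩
    · exfalso
      rcases hx with h | h <;> rw [mem_pair] at h
      · exact h.elim (fun h => hv12 h.symm) hv2w1
      · exact h.elim (fun h => hv1w2 h.symm) (fun h => hw12 h.symm)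
    · rfl
    · exfalso
      rcases hx with h | h <;> rw [mem_pair] at h
      · exact h.elim hv23 hv2w3
      · exact h.elim (fun h => hv3w2 h.symm) hw23
    · exfalso
      rcases hx with h | h <;> rw [Set.mem_singleton_iff] at h
      · exact hy (h ▸ hv2T)
      · exact hy (h ▸ hw2T)
  have uniq3 : ∀ S' ∈ P, (v3 ∈ S' ∨ w3 ∈ S') → S' = {v3, w3} := by
    intro S' hS' hx
    rcases (hmemP S').mp hS' with rfl | rfl | rfl | ⟨y, hy, rfl⟩
    · exfalso
      rcases hx with h | h <;> rw [mem_pair] at h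
      · exact h.elim (fun h => hv13 h.symm) hv3w1
      · exact h.elim (fun h => hv1w3 h.symm) (fun h => hw13 h.symm)
    · exfalso
      rcases hx with h | h <;> rw [mem_pair] at h
      · exact h.elim (fun h => hv23 h.symm) hv3w2
      · exact h.elim (fun h => hv2w3 h.symm) (fun h => hw23 h.symm)
    · rfl
    · exfalso
      rcases hx with h | h <;> rw [Set.mem_singleton_iff] at h
      · exact hy (h ▸ hv3T)
      · exact hy (h ▸ hw3T)
  -- canonical part of each vertex
  have hpart : ∀ x : V, ∃ S ∈ P, x ∈ S ∧ ∀ S' ∈ P, x ∈ S' → S' = S := by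
    intro x
    by_cases hxT : x ∈ T
    · rcases (hmemT x).mp hxT with h | h | h | h | h | h
      · exact ⟨{v1, w1}, hpair1P, (mem_pair _ _ _).mpr (Or.inl h),
          fun S' hS' hx => uniq1 S' hS' (Or.inl (h ▸ hx))⟩
      · exact ⟨{v2, w2}, hpair2P, (mem_pair _ _ _).mpr (Or.inl h),
          fun S' hS' hx => uniq2 S' hS' (Or.inl (h ▸ hx))⟩
      · exact ⟨{v3, w3}, hpair3P, (mem_pair _ _ _).mpr (Or.inl h),
          fun S' hS' hx => uniq3 S' hS' (Or.inl (h ▸ hx))⟩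
      · exact ⟨{v1, w1}, hpair1P, (mem_pair _ _ _).mpr (Or.inr h),
          fun S' hS' hx => uniq1 S' hS' (Or.inr (h ▸ hx))⟩
      · exact ⟨{v2, w2}, hpair2P, (mem_pair _ _ _).mpr (Or.inr h),
          fun S' hS' hx => uniq2 S' hS' (Or.inr (h ▸ hx))⟩
      · exact ⟨{v3, w3}, hpair3P, (mem_pair _ _ _).mpr (Or.inr h),
          fun S' hS' hx => uniq3 S' hS' (Or.inr (h ▸ hx))⟩
    · refine ⟨{x}, (hmemP _).mpr (Or.inr (Or.inr (Or.inr ⟨x, hxT, rfl⟩))), rfl, ?_⟩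
      intro S' hS' hxS'
      rcases (hmemP S').mp hS' with rfl | rfl | rfl | ⟨y, hy, rfl⟩
      · exact absurd ((mem_pair _ _ _).mp hxS').elim
          (by rintro h; exact hxT (h (fun h => h ▸ hv1T) (fun h => h ▸ hw1T)))
      · exact absurd ((mem_pair _ _ _).mp hxS').elim
          (by rintro h; exact hxT (h (fun h => h ▸ hv2T) (fun h => h ▸ hw2T)))
      · exact absurd ((mem_pair _ _ _).mp hxS').elim
          (by rintro h; exact hxT (h (fun h => h ▸ hv3T) (fun h => h ▸ hw3T)))
      · rw [Set.mem_singleton_iff] at hxS'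
        rw [hxS']
  -- P is a partition
  have hPart : Setoid.IsPartition P := by
    constructor
    · intro hemp
      rcases (hmemP ∅).mp hemp with h | h | h | ⟨x, _, h⟩ <;>
        first
          | exact absurd h.symm (Set.insert_nonempty _ _).ne_empty
          | exact absurd h.symm (Set.singleton_nonempty _).ne_empty
    · intro x
      obtain ⟨S, hS, hxS, huniq⟩ := hpart x
      exact ⟨S, ⟨hS, hxS⟩, fun S' hS' => huniq S' hS'.1 hS'.2⟩
  -- parts are nonempty
  have hne : ∀ S ∈ P, S.Nonempty := by
    intro S hS
    rcases (hmemP S).mp hS with h | h | h | ⟨x, _, h⟩ <;> subst h <;> simp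
  -- key distance fact: a neighbor and a non-neighbor of u differ on {u}
  have hdists : ∀ a b : V, G.Adj u a → ¬ G.Adj u b → b ≠ u →
      setDist G a {u} ≠ setDist G b {u} := by
    intro a b ha hb hbu
    rw [setDist_singleton, setDist_singleton]
    have h1 : G.dist a u = 1 := SimpleGraph.dist_eq_one_iff_adj.mpr ha.symm
    have h2 : G.dist b u ≠ 1 := fun h =>
      hb (SimpleGraph.dist_eq_one_iff_adj.mp h).symm
    rw [h1]
    exact fun h => h2 h.symm
  -- P is locating
  have hloc : IsLocatingPartition G P := by
    refine ⟨hPart, ?_⟩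
    intro x y hxy
    obtain ⟨S, hS, hxS, _⟩ := hpart x
    have hyS : y ∈ S := by
      have h0 : setDist G x S = 0 := (setDist_eq_zero_iff hG (hne S hS) x).mpr hxS
      exact (setDist_eq_zero_iff hG (hne S hS) y).mp ((hxy S hS).symm.trans h0)
    by_contra hxyne
    have hupart := hxy {u} huP
    rcases (hmemP S).mp hS with rfl | rfl | rfl | ⟨z, _, rfl⟩
    · rw [mem_pair] at hxS hyS
      rcases hxS with hx | hx <;> rcases hyS with hy | hy
      · exact hxyne (hx.trans hy.symm)
      · exact hdists v1 w1 hv1 hwa1 hwu1 (by rw [hx, hy] at hupart; exact hupart)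
      · exact hdists v1 w1 hv1 hwa1 hwu1 (by rw [hx, hy] at hupart; exact hupart.symm)
      · exact hxyne (hx.trans hy.symm)
    · rw [mem_pair] at hxS hyS
      rcases hxS with hx | hx <;> rcases hyS with hy | hy
      · exact hxyne (hx.trans hy.symm)
      · exact hdists v2 w2 hv2 hwa2 hwu2 (by rw [hx, hy] at hupart; exact hupart)
      · exact hdists v2 w2 hv2 hwa2 hwu2 (by rw [hx, hy] at hupart; exact hupart.symm)
      · exact hxyne (hx.trans hy.symm)
    · rw [mem_pair] at hxS hyS
      rcases hxS with hx | hx <;> rcases hyS with hy | hy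
      · exact hxyne (hx.trans hy.symm)
      · exact hdists v3 w3 hv3 hwa3 hwu3 (by rw [hx, hy] at hupart; exact hupart)
      · exact hdists v3 w3 hv3 hwa3 hwu3 (by rw [hx, hy] at hupart; exact hupart.symm)
      · exact hxyne (hx.trans hy.symm)
    · rw [Set.mem_singleton_iff] at hxS hyS
      exact hxyne (hxS.trans hyS.symm)
  -- cardinality of P
  have hPcard : P.ncard = n - 3 := by
    have hdisj : Disjoint ({{v1, w1}, {v2, w2}, {v3, w3}} : Set (Set V))
        ((fun x => ({x} : Set V)) '' Tᶜ) := by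
      rw [Set.disjoint_left]
      rintro S hS ⟨x, hx, rfl⟩
      simp only [Set.mem_insert_iff, Set.mem_singleton_iff] at hS
      rcases hS with h | h | h <;>
      · have h2 : ({x} : Set V).ncard = 2 := by
          rw [h]
          first
            | exact Set.ncard_pair hv1w1
            | exact Set.ncard_pair hv2w2
            | exact Set.ncard_pair hv3w3
        simp at h2
    have hpairs : ({{v1, w1}, {v2, w2}, {v3, w3}} : Set (Set V)).ncard = 3 := by
      have h12 : ({v1, w1} : Set V) ≠ {v2, w2} := by
        intro h
        have h' : v1 ∈ ({v2, w2} : Set V) := h ▸ (Set.mem_insert _ _)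
        rw [mem_pair] at h'
        exact h'.elim hv12 hv1w2
      have h13 : ({v1, w1} : Set V) ≠ {v3, w3} := by
        intro h
        have h' : v1 ∈ ({v3, w3} : Set V) := h ▸ (Set.mem_insert _ _)
        rw [mem_pair] at h'
        exact h'.elim hv13 hv1w3
      have h23 : ({v2, w2} : Set V) ≠ {v3, w3} := by
        intro h
        have h' : v2 ∈ ({v3, w3} : Set V) := h ▸ (Set.mem_insert _ _)
        rw [mem_pair] at h'
        exact h'.elim hv23 hv2w3
      rw [Set.ncard_insert_of_notMem (by simp [h12, h13]),
        Set.ncard_insert_of_notMem (by simp [h23]), Set.ncard_singleton]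
    have himg : ((fun x => ({x} : Set V)) '' Tᶜ).ncard = n - 6 := by
      rw [Set.ncard_image_of_injective _ (fun a b hab => by
        simpa using hab)]
      omega
    rw [hP, Set.ncard_union_eq hdisj, hpairs, himg]
    omega
  exact Nat.sInf_le ⟨P, hloc, hPcard⟩
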